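/- Let Γ ⊂ ℤ be an infinite set and let B be the Zygmund basis of all 3-dimensional intervals R₁×R₂×R₃ such that |R₁| and |R₂| are dyadic numbers and |R₃| = 2^γ·|R₂| for some γ ∈ Γ. Then there is an absolute constant c > 0 such that for every α ∈ (0,1) there exists a bounded measurable set E ⊂ ℝ³ of positive Lebesgue measure with |{x ∈ ℝ³ : M_B(χ_E)(x) > α}| ≥ c · (1/α) · (1 + log(1/α))² · |E|. -/

import Mathlib

open MeasureTheory Set
open scoped ENNReal

noncomputable section

/-- An axis-parallel interval (box) in `ℝⁿ`, given by its left and right endpoints. -/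
structure BoxInterval (n : ℕ) where
  a : Fin n → ℝ
  b : Fin n → ℝ
  hab : ∀ j, a j < b j

namespace BoxInterval

/-- The underlying set of a box. -/
def toSet {n : ℕ} (R : BoxInterval n) : Set (Fin n → ℝ) :=
  Set.univ.pi fun j => Set.Icc (R.a j) (R.b j)

/-- The side length of a box in direction `j`. -/
def side {n : ℕ} (R : BoxInterval n) (j : Fin n) : ℝ := R.b j - R.a j

/-- Translation of a box by a vector `v`. -/
def translate {n : ℕ} (R : BoxInterval n) (v : Fin n → ℝ) : BoxInterval n where
  a := fun j => R.a j + v j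
  b := fun j => R.b j + v j
  hab := fun j => add_lt_add_of_lt_of_le (R.hab j) le_rfl

end BoxInterval

/-- A rare basis in `ℝⁿ`: a nonempty translation-invariant collection of intervals. -/
def IsRareBasis {n : ℕ} (B : Set (BoxInterval n)) : Prop :=
  B.Nonempty ∧ ∀ R ∈ B, ∀ v : Fin n → ℝ, R.translate v ∈ B

/-- The geometric maximal operator `M_B` associated with a collection `B` of boxes:
`M_B f (x) = sup { (1/|R|) ∫_R |f| : x ∈ R ∈ B }`. -/
def maxOp {n : ℕ} (B : Set (BoxInterval n)) (f : (Fin n → ℝ) → ℝ)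
    (x : Fin n → ℝ) : ℝ≥0∞ :=
  ⨆ (R : BoxInterval n) (_ : R ∈ B) (_ : x ∈ R.toSet),
    (∫⁻ y in R.toSet, ENNReal.ofReal |f y| ∂volume) / volume R.toSet

/-- The spectrum `W_B ⊂ ℤⁿ` of a collection of boxes: all tuples
`(⌈log₂ |R₁|⌉, …, ⌈log₂ |Rₙ|⌉)` over boxes `R₁ × ⋯ × Rₙ ∈ B`. -/
def spectrumB {n : ℕ} (B : Set (BoxInterval n)) : Set (Fin n → ℤ) :=
  {w | ∃ R ∈ B, ∀ j, w j = ⌈Real.logb 2 (R.side j)⌉}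

/-- The slice `W_t` of `W ⊂ ℤ^{k+1}` over `t ∈ ℤᵏ`. -/
def sliceZ {k : ℕ} (W : Set (Fin (k + 1) → ℤ)) (t : Fin k → ℤ) : Set ℤ :=
  {τ | Fin.snoc t τ ∈ W}

/-- `W` is a net for `S` in `ℤ^{k+1}`: every slice of `W` is a one-dimensional
net for the corresponding slice of `S`. -/
def IsNetMulti {k : ℕ} (W S : Set (Fin (k + 1) → ℤ)) : Prop :=
  ∀ t : Fin k → ℤ, ∃ N : ℕ, ∀ τ ∈ sliceZ S t, ∃ w ∈ sliceZ W t, |τ - w| ≤ (N : ℤ)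

/-- Projection of `W ⊂ ℤⁿ` onto the first `k` coordinates. -/
def projZ {n : ℕ} (k : ℕ) (hk : k ≤ n) (W : Set (Fin n → ℤ)) : Set (Fin k → ℤ) :=
  (fun w (i : Fin k) => w (Fin.castLE hk i)) '' W

/-- `W ⊂ ℤⁿ` is dense in `S₁ × ⋯ × Sₙ`: for each `k`, `π_{k+1}(W)` is a net for
`π_k(W) × S_{k+1}`. -/
def IsDenseIn {n : ℕ} (W : Set (Fin n → ℤ)) (S : Fin n → Set ℤ) : Prop :=
  ∀ k : Fin n,
    IsNetMulti (projZ (k.val + 1) k.isLt W)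
      {v : Fin (k.val + 1) → ℤ |
        Fin.init v ∈ projZ k.val (Nat.le_of_lt k.isLt) W ∧ v (Fin.last k.val) ∈ S k}

/-- `Ω_{n,k}`: the set of `n`-tuples of positive integers summing to `k`. -/
def OmegaNK (n k : ℕ) : Set (Fin n → ℕ) :=
  {m | (∀ j, 1 ≤ m j) ∧ ∑ j, m j = k}

/-- The smallest box concentric with `R`, containing `R`, with dyadic side lengths. -/
def dyadicHull {n : ℕ} (R : BoxInterval n) : BoxInterval n where
  a := fun j => (R.a j + R.b j) / 2 - (2:ℝ) ^ ⌈Real.logb 2 (R.side j)⌉ / 2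
  b := fun j => (R.a j + R.b j) / 2 + (2:ℝ) ^ ⌈Real.logb 2 (R.side j)⌉ / 2
  hab := fun j => by
    have h : (0:ℝ) < (2:ℝ) ^ ⌈Real.logb 2 (R.side j)⌉ := by positivity
    linarith

/-- The dyadic skeleton `B_d` of a collection `B`. -/
def dyadicSkeleton {n : ℕ} (B : Set (BoxInterval n)) : Set (BoxInterval n) :=
  {Rd | ∃ R ∈ B, Rd = dyadicHull R}

/-- `B` is `Ω`-complete (for `Ω ⊆ Ω_{n,k}`). -/
def OmegaComplete {n : ℕ} (B : Set (BoxInterval n)) (k : ℕ) (Ω : Set (Fin n → ℕ)) : Prop :=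
  ∃ s : Fin n → ℕ → ℤ,
    (∀ j, ∀ m, m < k → s j m < s j (m + 1)) ∧
    ∀ m ∈ Ω, ∃ R ∈ dyadicSkeleton B, ∀ j,
      R.side j ∈ Set.Ioc ((2:ℝ) ^ s j (m j - 1)) ((2:ℝ) ^ s j (m j))

/-- Product of an `n`-dimensional box and a one-dimensional box. -/
def prodBox {n : ℕ} (J1 : BoxInterval n) (J2 : BoxInterval 1) : BoxInterval (n + 1) where
  a := Fin.snoc J1.a (J2.a 0)
  b := Fin.snoc J1.b (J2.b 0)
  hab := fun j => by
    induction j using Fin.lastCases with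
    | last => simpa using J2.hab 0
    | cast i => simpa using J1.hab i

/-- The product basis `B₁ × B₂`. -/
def prodBasis {n : ℕ} (B1 : Set (BoxInterval n)) (B2 : Set (BoxInterval 1)) :
    Set (BoxInterval (n + 1)) :=
  {R | ∃ J1 ∈ B1, ∃ J2 ∈ B2, R = prodBox J1 J2}

/-- The (is)-property of a rare basis in `ℝ²`. -/
def ISProperty (B : Set (BoxInterval 2)) : Prop :=
  ∀ k : ℕ, ∃ R : Fin (k + 1) → BoxInterval 2,
    (∀ i, R i ∈ B) ∧
    (∀ i, (R i).a = fun _ => 0) ∧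
    (∀ i, ∃ pq : Fin 2 → ℤ, ∀ l, (R i).b l = (2:ℝ) ^ pq l) ∧
    (∀ i j, i ≠ j → ∀ v : Fin 2 → ℝ, ¬ ((R i).translate v).toSet ⊆ (R j).toSet) ∧
    (∀ i j, ∃ Q ∈ B, Q.toSet = (R i).toSet ∩ (R j).toSet)


namespace Stmt11Aux

/-- two to an integer power, as a real -/
local notation "tp" e => (2:ℝ) ^ (e : ℤ)

lemma tp_pos (e : ℤ) : (0:ℝ) < 2 ^ e := by positivity

lemma tp_mono {e f : ℤ} (h : e ≤ f) : (2:ℝ) ^ e ≤ 2 ^ f :=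
  zpow_le_zpow_right₀ (by norm_num) h

lemma tp_add (e f : ℤ) : (2:ℝ) ^ (e + f) = 2 ^ e * 2 ^ f :=
  zpow_add₀ (by norm_num) e f

variable (lam : ℕ → ℤ)

/-- number of blocks (as an exponent) at step `t → t+1` -/
def nu (t : ℕ) : ℕ := (lam (t+1) - lam t - 1).toNat

/-- the Cantor-type set in the third coordinate -/
def zset : ℕ → Set ℝ
  | 0 => Ico 0 ((2:ℝ) ^ (lam 0 - 1))
  | t+1 => ⋃ m ∈ Finset.range (2 ^ nu lam t),
      (fun z => (m : ℝ) * (2:ℝ) ^ (lam t) + z) '' zset t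

variable {lam}

variable (hg : ∀ t, lam t + 2 ≤ lam (t+1))
include hg

lemma nu_cast (t : ℕ) : ((nu lam t : ℤ)) = lam (t+1) - lam t - 1 := by
  have := hg t
  simp only [nu]
  omega

lemma nu_pow (t : ℕ) : ((2 ^ nu lam t : ℕ) : ℝ) * (2:ℝ) ^ (lam t) = 2 ^ (lam (t+1) - 1) := by
  have : ((2 ^ nu lam t : ℕ) : ℝ) = (2:ℝ) ^ ((nu lam t : ℤ)) := by
    push_cast
    rw [zpow_natCast]
  rw [this, ← tp_add, nu_cast hg]
  ring_nf

lemma zset_subset (t : ℕ) : zset lam t ⊆ Ico 0 ((2:ℝ) ^ (lam t - 1)) := by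
  induction t with
  | zero => exact fun x hx => hx
  | succ t ih =>
    intro x hx
    simp only [zset, Set.mem_iUnion, Finset.mem_range] at hx
    obtain ⟨m, hm, z, hz, rfl⟩ := hx
    have hz' := ih hz
    obtain ⟨hz0, hz1⟩ := hz'
    have hm0 : (0:ℝ) ≤ (m : ℝ) * 2 ^ (lam t) :=
      mul_nonneg (by positivity) (tp_pos _).le
    constructor
    · positivity
    · have hmR : (m : ℝ) ≤ ((2 ^ nu lam t : ℕ) : ℝ) - 1 := by
        have h1 : (m : ℝ) + 1 ≤ ((2 ^ nu lam t : ℕ) : ℝ) := by exact_mod_cast hm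
        linarith
      have hnp := nu_pow hg t
      have h2 : (2:ℝ) ^ (lam t - 1) ≤ 2 ^ (lam t) := tp_mono (by omega)
      have h3 : ((m:ℝ)) * 2 ^ (lam t) + z <
          (((2 ^ nu lam t : ℕ) : ℝ) - 1) * 2 ^ (lam t) + 2 ^ (lam t - 1) := by
        have := tp_pos (lam t)
        nlinarith
      calc (fun z => (m:ℝ) * 2 ^ (lam t) + z) z = (m:ℝ) * 2 ^ (lam t) + z := rfl
        _ < (((2 ^ nu lam t : ℕ) : ℝ) - 1) * 2 ^ (lam t) + 2 ^ (lam t - 1) := h3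
        _ = 2 ^ (lam (t+1) - 1) - 2 ^ (lam t) + 2 ^ (lam t - 1) := by rw [sub_mul, one_mul, hnp]
        _ ≤ 2 ^ (lam (t+1) - 1) := by linarith


omit hg

lemma zset_meas (t : ℕ) : MeasurableSet (zset lam t) := by
  induction t with
  | zero => exact measurableSet_Ico
  | succ t ih =>
    apply MeasurableSet.biUnion (Finset.range _).countable_toSet
    intro m _
    exact (MeasurableEquiv.addLeft ((m:ℝ) * 2 ^ (lam t))).measurableSet_image.mpr ih

lemma translate_vol (c : ℝ) (A : Set ℝ) :
    volume ((fun z => c + z) '' A) = volume A := by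
  rw [Set.image_add_left]; exact measure_preimage_add volume _ _

include hg

/-- blocks are pairwise disjoint and the union has the expected volume -/
lemma zset_vol (t : ℕ) :
    volume (zset lam t) = ENNReal.ofReal ((2:ℝ) ^ (lam t - 1 - t)) := by
  induction t with
  | zero => simp [zset, Real.volume_Ico]
  | succ t ih =>
    have hdisj : (Finset.range (2 ^ nu lam t) : Set ℕ).PairwiseDisjoint
        (fun m => (fun z => (m : ℝ) * (2:ℝ) ^ (lam t) + z) '' zset lam t) := by
      intro m _ m' _ hmm
      have key : ∀ (a b : ℕ), a < b →
          Disjoint ((fun z => (a : ℝ) * (2:ℝ) ^ (lam t) + z) '' zset lam t)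
            ((fun z => (b : ℝ) * (2:ℝ) ^ (lam t) + z) '' zset lam t) := by
        intro a b hab
        rw [Set.disjoint_left]
        rintro x ⟨z, hz, rfl⟩ ⟨z', hz', hx⟩
        have h1 := (zset_subset hg t hz).2
        have h2 := (zset_subset hg t hz').1
        have hle : (2:ℝ) ^ (lam t - 1) ≤ 2 ^ (lam t) := tp_mono (by omega)
        have hab' : (a : ℝ) + 1 ≤ (b : ℝ) := by exact_mod_cast hab
        have hx' : (b:ℝ) * 2 ^ (lam t) + z' = (a:ℝ) * 2 ^ (lam t) + z := hx
        have := tp_pos (lam t)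
        nlinarith [mul_le_mul_of_nonneg_right (by linarith : (1:ℝ) ≤ (b:ℝ) - (a:ℝ)) this.le]
      rcases lt_or_gt_of_ne hmm with h | h
      · exact key m m' h
      · exact (key m' m h).symm
    have : volume (zset lam (t+1)) =
        ∑ m ∈ Finset.range (2 ^ nu lam t),
          volume ((fun z => (m : ℝ) * (2:ℝ) ^ (lam t) + z) '' zset lam t) := by
      rw [zset]
      exact measure_biUnion_finset hdisj
        (fun m _ => (MeasurableEquiv.addLeft _).measurableSet_image.mpr (zset_meas t))
    rw [this]
    simp_rw [translate_vol, ih, Finset.sum_const, Finset.card_range, nsmul_eq_mul]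
    rw [← ENNReal.ofReal_natCast, ← ENNReal.ofReal_mul (by positivity)]
    congr 1
    have : ((2 ^ nu lam t : ℕ) : ℝ) = (2:ℝ) ^ ((nu lam t : ℤ)) := by
      push_cast; rw [zpow_natCast]
    rw [this, ← tp_add, nu_cast hg]
    congr 1
    push_cast
    ring


omit hg

variable (lam) in
/-- branch/translate structure above level `t` (the z-part of the sets `U`) -/
def vz (t : ℕ) : ℕ → Set ℝ
  | 0 => Ico 0 ((2:ℝ) ^ (lam t - 2))
  | j+1 => ⋃ m ∈ Finset.range (2 ^ nu lam (t+j)),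
      (fun z => (m : ℝ) * (2:ℝ) ^ (lam (t+j)) + z) '' vz t j

lemma vz_meas (t j : ℕ) : MeasurableSet (vz lam t j) := by
  induction j with
  | zero => exact measurableSet_Ico
  | succ j ih =>
    apply MeasurableSet.biUnion (Finset.range _).countable_toSet
    intro m _
    exact (MeasurableEquiv.addLeft _).measurableSet_image.mpr ih

include hg

lemma vz_subset (t j : ℕ) : vz lam t j ⊆ Ico 0 ((2:ℝ) ^ (lam (t+j) - 1)) := by
  induction j with
  | zero =>
    refine fun x hx => ⟨hx.1, lt_of_lt_of_le hx.2 ?_⟩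
    rw [Nat.add_zero]
    exact tp_mono (by omega)
  | succ j ih =>
    intro x hx
    simp only [vz, Set.mem_iUnion, Finset.mem_range] at hx
    obtain ⟨m, hm, z, hz, rfl⟩ := hx
    obtain ⟨hz0, hz1⟩ := ih hz
    constructor
    · positivity
    · have hmR : (m : ℝ) ≤ ((2 ^ nu lam (t+j) : ℕ) : ℝ) - 1 := by
        have h1 : (m : ℝ) + 1 ≤ ((2 ^ nu lam (t+j) : ℕ) : ℝ) := by exact_mod_cast hm
        linarith
      have hnp := nu_pow hg (t+j)
      have h2 : (2:ℝ) ^ (lam (t+j) - 1) ≤ 2 ^ (lam (t+j)) := tp_mono (by omega)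
      have h3 : ((m:ℝ)) * 2 ^ (lam (t+j)) + z <
          (((2 ^ nu lam (t+j) : ℕ) : ℝ) - 1) * 2 ^ (lam (t+j)) + 2 ^ (lam (t+j) - 1) := by
        have := tp_pos (lam (t+j))
        nlinarith
      calc (fun z => (m:ℝ) * 2 ^ (lam (t+j)) + z) z = (m:ℝ) * 2 ^ (lam (t+j)) + z := rfl
        _ < (((2 ^ nu lam (t+j) : ℕ) : ℝ) - 1) * 2 ^ (lam (t+j)) + 2 ^ (lam (t+j) - 1) := h3
        _ = 2 ^ (lam (t+j+1) - 1) - 2 ^ (lam (t+j)) + 2 ^ (lam (t+j) - 1) := by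
            rw [sub_mul, one_mul, hnp]
        _ ≤ 2 ^ (lam (t+j+1) - 1) := by linarith

lemma vz_vol (t j : ℕ) :
    volume (vz lam t j) = ENNReal.ofReal ((2:ℝ) ^ (lam (t+j) - 2 - j)) := by
  induction j with
  | zero => simp [vz, Real.volume_Ico]
  | succ j ih =>
    have hdisj : (Finset.range (2 ^ nu lam (t+j)) : Set ℕ).PairwiseDisjoint
        (fun m => (fun z => (m : ℝ) * (2:ℝ) ^ (lam (t+j)) + z) '' vz lam t j) := by
      intro m _ m' _ hmm
      have key : ∀ (a b : ℕ), a < b →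
          Disjoint ((fun z => (a : ℝ) * (2:ℝ) ^ (lam (t+j)) + z) '' vz lam t j)
            ((fun z => (b : ℝ) * (2:ℝ) ^ (lam (t+j)) + z) '' vz lam t j) := by
        intro a b hab
        rw [Set.disjoint_left]
        rintro x ⟨z, hz, rfl⟩ ⟨z', hz', hx⟩
        have h1 := (vz_subset hg t j hz).2
        have h2 := (vz_subset hg t j hz').1
        have hle : (2:ℝ) ^ (lam (t+j) - 1) ≤ 2 ^ (lam (t+j)) := tp_mono (by omega)
        have hab' : (a : ℝ) + 1 ≤ (b : ℝ) := by exact_mod_cast hab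
        have hx' : (b:ℝ) * 2 ^ (lam (t+j)) + z' = (a:ℝ) * 2 ^ (lam (t+j)) + z := hx
        have := tp_pos (lam (t+j))
        nlinarith [mul_le_mul_of_nonneg_right (by linarith : (1:ℝ) ≤ (b:ℝ) - (a:ℝ)) this.le]
      rcases lt_or_gt_of_ne hmm with h | h
      · exact key m m' h
      · exact (key m' m h).symm
    have hstep : volume (vz lam t (j+1)) =
        ∑ m ∈ Finset.range (2 ^ nu lam (t+j)),
          volume ((fun z => (m : ℝ) * (2:ℝ) ^ (lam (t+j)) + z) '' vz lam t j) := by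
      rw [vz]
      exact measure_biUnion_finset hdisj
        (fun m _ => (MeasurableEquiv.addLeft _).measurableSet_image.mpr (vz_meas t j))
    rw [hstep]
    simp_rw [translate_vol, ih, Finset.sum_const, Finset.card_range, nsmul_eq_mul]
    rw [← ENNReal.ofReal_natCast, ← ENNReal.ofReal_mul (by positivity)]
    congr 1
    have : ((2 ^ nu lam (t+j) : ℕ) : ℝ) = (2:ℝ) ^ ((nu lam (t+j) : ℤ)) := by
      push_cast; rw [zpow_natCast]
    rw [this, ← tp_add, nu_cast hg]
    congr 1
    push_cast
    ring

omit hg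

lemma vz_branch (t j : ℕ) : ∀ y ∈ vz lam t j, ∃ σ : ℝ,
    (y - σ ∈ Ico 0 ((2:ℝ) ^ (lam t - 2))) ∧
    (fun z => σ + z) '' zset lam t ⊆ zset lam (t + j) := by
  induction j with
  | zero =>
    intro y hy
    refine ⟨0, by simpa [vz] using hy, ?_⟩
    simp
  | succ j ih =>
    intro y hy
    simp only [vz, Set.mem_iUnion, Finset.mem_range] at hy
    obtain ⟨m, hm, y', hy', rfl⟩ := hy
    obtain ⟨σ', hσ1, hσ2⟩ := ih y' hy'
    refine ⟨(m:ℝ) * 2 ^ (lam (t+j)) + σ', by simpa using hσ1, ?_⟩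
    have himg : (fun z => ((m:ℝ) * 2 ^ (lam (t+j)) + σ') + z) '' zset lam t =
        (fun z => (m:ℝ) * 2 ^ (lam (t+j)) + z) '' ((fun z => σ' + z) '' zset lam t) := by
      rw [Set.image_image]
      apply Set.image_congr'
      intro z
      ring
    rw [himg]
    intro x hx
    obtain ⟨z, hz, rfl⟩ := hx
    have hz' : z ∈ zset lam (t + j) := hσ2 hz
    have : zset lam (t + j + 1) = ⋃ m' ∈ Finset.range (2 ^ nu lam (t+j)),
        (fun z => (m' : ℝ) * (2:ℝ) ^ (lam (t+j)) + z) '' zset lam (t+j) := rfl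
    rw [show t + (j+1) = (t+j) + 1 from rfl, this]
    simp only [Set.mem_iUnion, Finset.mem_range]
    exact ⟨m, hm, z, hz', rfl⟩


include hg

/-- Key capture lemma: any window of length `2^w` (with `w` in the level-`s+1` range of scales)
positioned inside the fundamental domain carries at least `2^(w-(s+1)-1)` of `zset (s+1)` mass. -/
lemma capture (s : ℕ) (w : ℤ) (hw1 : lam s + 2 ≤ w) (hw2 : w ≤ lam (s+1) - 3)
    (y : ℝ) (hy : y ∈ Ico 0 ((2:ℝ) ^ (lam (s+1) - 2))) :
    ENNReal.ofReal ((2:ℝ) ^ (w - (s+1) - 1)) ≤ volume (zset lam (s+1) ∩ Icc y (y + 2 ^ w)) := by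
  set lm := lam s with hlm
  have h2l : (0:ℝ) < 2 ^ lm := tp_pos _
  set r : ℕ := (w - lm).toNat with hr
  have hrZ : (r : ℤ) = w - lm := Int.toNat_of_nonneg (by omega)
  have hr2 : 2 ≤ r := by omega
  have hpowr : ((2 ^ r : ℕ) : ℝ) * 2 ^ lm = 2 ^ w := by
    have : ((2 ^ r : ℕ) : ℝ) = (2:ℝ) ^ ((r : ℤ)) := by push_cast; rw [zpow_natCast]
    rw [this, ← tp_add, hrZ]
    ring_nf
  set m₀ : ℤ := ⌈y / 2 ^ lm⌉ with hm₀
  have hm₀0 : 0 ≤ m₀ := Int.ceil_nonneg (div_nonneg hy.1 h2l.le)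
  have hylb : y ≤ (m₀ : ℝ) * 2 ^ lm := by
    have := Int.le_ceil (y / 2 ^ lm)
    calc y = y / 2 ^ lm * 2 ^ lm := by field_simp
      _ ≤ (m₀ : ℝ) * 2 ^ lm := by
          apply mul_le_mul_of_nonneg_right _ h2l.le
          exact_mod_cast this
  have hyub : (m₀ : ℝ) * 2 ^ lm < y + 2 ^ lm := by
    have := Int.ceil_lt_add_one (y / 2 ^ lm)
    have h' : (m₀ : ℝ) < y / 2 ^ lm + 1 := by exact_mod_cast this
    calc (m₀ : ℝ) * 2 ^ lm < (y / 2 ^ lm + 1) * 2 ^ lm := by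
          exact mul_lt_mul_of_pos_right h' h2l
      _ = y + 2 ^ lm := by field_simp
  -- global size bound
  have hbig : y + 2 ^ w ≤ 2 ^ (lam (s+1) - 2) + 2 ^ (lam (s+1) - 3) := by
    have h1 : (2:ℝ) ^ w ≤ 2 ^ (lam (s+1) - 3) := tp_mono hw2
    have := hy.2
    linarith
  have hq : (2:ℝ) ^ (lam (s+1) - 2) + 2 ^ (lam (s+1) - 3) < 2 ^ (lam (s+1) - 1) := by
    have e1 : (2:ℝ) ^ (lam (s+1) - 1) = 2 ^ (lam (s+1) - 3) * 2 ^ (2:ℤ) := by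
      rw [← tp_add]; ring_nf
    have e2 : (2:ℝ) ^ (lam (s+1) - 2) = 2 ^ (lam (s+1) - 3) * 2 ^ (1:ℤ) := by
      rw [← tp_add]; ring_nf
    have := tp_pos (lam (s+1) - 3)
    rw [e1, e2]
    norm_num
    nlinarith
  -- the blocks
  set F : Finset ℕ := Finset.range (2 ^ r - 1) with hF
  set Blk : ℕ → Set ℝ := fun i =>
    (fun z => ((m₀ : ℝ) + (i : ℝ)) * 2 ^ lm + z) '' zset lam s with hBlk
  have hspan : ∀ i ∈ F, Blk i ⊆
      Ico (((m₀ : ℝ) + (i : ℝ)) * 2 ^ lm) (((m₀ : ℝ) + (i : ℝ)) * 2 ^ lm + 2 ^ (lm - 1)) := by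
    intro i _ x hx
    obtain ⟨z, hz, rfl⟩ := hx
    have h := zset_subset hg s hz
    exact ⟨by simpa using h.1, by simpa using h.2⟩
  -- each block's right end is below y + 2^w ; each block's left end is ≥ y
  have htop : ∀ i ∈ F, ((m₀ : ℝ) + (i : ℝ)) * 2 ^ lm + 2 ^ (lm - 1) ≤ y + 2 ^ w := by
    intro i hi
    have hiR : (i : ℝ) ≤ ((2 ^ r : ℕ) : ℝ) - 2 := by
      have : (i : ℕ) < 2 ^ r - 1 := Finset.mem_range.mp hi
      have h2 : (1:ℕ) ≤ 2 ^ r := Nat.one_le_two_pow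
      have : (i : ℝ) + 1 ≤ ((2 ^ r - 1 : ℕ) : ℝ) := by exact_mod_cast this
      have hc : ((2 ^ r - 1 : ℕ) : ℝ) = ((2 ^ r : ℕ) : ℝ) - 1 := by
        push_cast [Nat.cast_sub h2]; ring
      linarith [hc ▸ this]
    have hhalf : (2:ℝ) ^ (lm - 1) ≤ 2 ^ lm := tp_mono (by omega)
    nlinarith [hpowr, hyub, mul_le_mul_of_nonneg_right hiR h2l.le]
  have hbot : ∀ i ∈ F, y ≤ ((m₀ : ℝ) + (i : ℝ)) * 2 ^ lm := by
    intro i _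
    have : (0:ℝ) ≤ (i : ℝ) * 2 ^ lm := by positivity
    nlinarith [hylb]
  -- blocks sit inside zset (s+1)
  have hmem : ∀ i ∈ F, Blk i ⊆ zset lam (s+1) := by
    intro i hi
    -- integer bound
    have hub : ((m₀ : ℝ) + (i : ℝ)) * 2 ^ lm < ((2 ^ nu lam s : ℕ) : ℝ) * 2 ^ lm := by
      rw [nu_pow hg s]
      have h1 := htop i hi
      have h2 := tp_pos (lm - 1)
      linarith [hbig, hq]
    have hublt : (m₀ + (i:ℤ)) < 2 ^ nu lam s := by
      have : ((m₀ + (i:ℤ) : ℤ) : ℝ) < ((2 ^ nu lam s : ℕ) : ℝ) :=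
        lt_of_mul_lt_mul_right (by push_cast at hub ⊢; linarith [hub]) h2l.le
      exact_mod_cast this
    intro x hx
    obtain ⟨z, hz, rfl⟩ := hx
    have htn : ((m₀ + (i:ℤ)).toNat : ℤ) = m₀ + i := Int.toNat_of_nonneg (by omega)
    have hnat : (((m₀ + (i:ℤ)).toNat : ℕ) : ℝ) = (m₀ : ℝ) + (i : ℝ) := by
      calc (((m₀ + (i:ℤ)).toNat : ℕ) : ℝ) = ((((m₀ + (i:ℤ)).toNat : ℕ) : ℤ) : ℝ) := by
            push_cast; ring
        _ = ((m₀ + (i:ℤ) : ℤ) : ℝ) := by rw [htn]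
        _ = (m₀ : ℝ) + (i : ℝ) := by push_cast; ring
    have : zset lam (s+1) = ⋃ m ∈ Finset.range (2 ^ nu lam s),
        (fun z => (m : ℝ) * (2:ℝ) ^ (lam s) + z) '' zset lam s := rfl
    rw [this]
    simp only [Set.mem_iUnion, Finset.mem_range]
    refine ⟨(m₀ + (i:ℤ)).toNat, ?_, z, hz, ?_⟩
    · have h1 : ((m₀ + (i:ℤ)).toNat : ℤ) < ((2 ^ nu lam s : ℕ) : ℤ) := by
        rw [htn]; exact_mod_cast hublt
      exact_mod_cast h1
    · rw [hnat]
  -- pairwise disjoint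
  have hdisj : (F : Set ℕ).PairwiseDisjoint Blk := by
    intro a _ b _ hab
    have key : ∀ (a b : ℕ), a < b → Disjoint (Blk a) (Blk b) := by
      intro a b hab'
      rw [Set.disjoint_left]
      rintro x ⟨z, hz, rfl⟩ ⟨z', hz', hx⟩
      have h1 := (zset_subset hg s hz).2
      have h2 := (zset_subset hg s hz').1
      have hle : (2:ℝ) ^ (lm - 1) ≤ 2 ^ lm := tp_mono (by omega)
      have hab'' : (a : ℝ) + 1 ≤ (b : ℝ) := by exact_mod_cast hab'
      have hx' : ((m₀:ℝ) + (b:ℝ)) * 2 ^ lm + z' = ((m₀:ℝ) + (a:ℝ)) * 2 ^ lm + z := hx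
      nlinarith [mul_le_mul_of_nonneg_right (by linarith : (1:ℝ) ≤ (b:ℝ) - (a:ℝ)) h2l.le]
    rcases lt_or_gt_of_ne hab with h | h
    · exact key a b h
    · exact (key b a h).symm
  -- put it together
  have hsub : (⋃ i ∈ F, Blk i) ⊆ zset lam (s+1) ∩ Icc y (y + 2 ^ w) := by
    intro x hx
    simp only [Set.mem_iUnion] at hx
    obtain ⟨i, hi, hxi⟩ := hx
    refine ⟨hmem i hi hxi, ?_⟩
    have h1 := hspan i hi hxi
    exact ⟨le_trans (hbot i hi) h1.1, le_trans h1.2.le (htop i hi)⟩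
  have hvol : volume (⋃ i ∈ F, Blk i) =
      ((2 ^ r - 1 : ℕ)) * ENNReal.ofReal ((2:ℝ) ^ (lm - 1 - s)) := by
    rw [measure_biUnion_finset hdisj
      (fun i _ => (MeasurableEquiv.addLeft _).measurableSet_image.mpr (zset_meas s))]
    have : ∀ i ∈ F, volume (Blk i) = ENNReal.ofReal ((2:ℝ) ^ (lm - 1 - s)) := by
      intro i _
      rw [hBlk]
      simp only
      rw [translate_vol, zset_vol hg]
    rw [Finset.sum_congr rfl this, Finset.sum_const, Finset.card_range, nsmul_eq_mul]
  calc ENNReal.ofReal ((2:ℝ) ^ (w - (s+1) - 1))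
      ≤ ((2 ^ r - 1 : ℕ)) * ENNReal.ofReal ((2:ℝ) ^ (lm - 1 - s)) := by
        rw [← ENNReal.ofReal_natCast, ← ENNReal.ofReal_mul (by positivity)]
        apply ENNReal.ofReal_le_ofReal
        have hcard : (2:ℝ) ^ ((r:ℤ) - 1) ≤ ((2 ^ r - 1 : ℕ) : ℝ) := by
          have h2 : (1:ℕ) ≤ 2 ^ r := Nat.one_le_two_pow
          have hc : ((2 ^ r - 1 : ℕ) : ℝ) = ((2 ^ r : ℕ) : ℝ) - 1 := by
            push_cast [Nat.cast_sub h2]; ring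
          have hpr : ((2 ^ r : ℕ) : ℝ) = (2:ℝ) ^ ((r:ℤ)) := by
            push_cast; rw [zpow_natCast]
          have hd : (2:ℝ) ^ ((r:ℤ)) = 2 * 2 ^ ((r:ℤ) - 1) := by
            rw [show ((r:ℤ)) = 1 + ((r:ℤ) - 1) by ring, tp_add]
            norm_num
          have := tp_pos ((r:ℤ) - 1)
          have h1 : (1:ℝ) ≤ 2 ^ ((r:ℤ) - 1) := by
            have : (0:ℤ) ≤ (r:ℤ) - 1 := by omega
            calc (1:ℝ) = 2 ^ (0:ℤ) := by norm_num
              _ ≤ 2 ^ ((r:ℤ) - 1) := tp_mono this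
          rw [hc, hpr, hd]
          linarith
        calc (2:ℝ) ^ (w - (s+1) - 1) = 2 ^ ((r:ℤ) - 1) * 2 ^ (lm - 1 - s) := by
              rw [← tp_add]
              congr 1
              push_cast
              omega
          _ ≤ ((2 ^ r - 1 : ℕ) : ℝ) * 2 ^ (lm - 1 - s) := by
              exact mul_le_mul_of_nonneg_right hcard (tp_pos _).le
    _ = volume (⋃ i ∈ F, Blk i) := hvol.symm
    _ ≤ volume (zset lam (s+1) ∩ Icc y (y + 2 ^ w)) := measure_mono hsub


omit hg

variable (lam) in
/-- the fractal set `E` -/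
def cubeE (T : ℕ) : Set (Fin 3 → ℝ) :=
  univ.pi ![Ico 0 1, Ico 0 1, zset lam T]

variable (lam) in
/-- the component of the superlevel set associated to the pair `(t,u)` -/
def USet (K T t u : ℕ) : Set (Fin 3 → ℝ) :=
  univ.pi ![Ico ((2:ℝ) ^ ((K:ℤ) - t - u)) ((2:ℝ) ^ ((K:ℤ) + 1 - t - u)),
    Ico ((2:ℝ) ^ ((u:ℤ) - 1)) ((2:ℝ) ^ ((u:ℤ))), vz lam t (T - t)]

lemma cubeE_meas (T : ℕ) : MeasurableSet (cubeE lam T) := by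
  apply MeasurableSet.univ_pi
  intro i
  fin_cases i
  · exact measurableSet_Ico
  · exact measurableSet_Ico
  · exact zset_meas T

lemma USet_meas (K T t u : ℕ) : MeasurableSet (USet lam K T t u) := by
  apply MeasurableSet.univ_pi
  intro i
  fin_cases i
  · exact measurableSet_Ico
  · exact measurableSet_Ico
  · exact vz_meas t (T - t)

include hg

lemma cubeE_vol (T : ℕ) :
    volume (cubeE lam T) = ENNReal.ofReal ((2:ℝ) ^ (lam T - 1 - T)) := by
  rw [cubeE, volume_pi_pi]
  rw [Fin.prod_univ_three]
  simp only [Matrix.cons_val_zero, Matrix.cons_val_one, Matrix.head_cons,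
    Matrix.cons_val_two, Matrix.tail_cons]
  rw [Real.volume_Ico, zset_vol hg]
  norm_num

lemma cubeE_vol_pos (T : ℕ) : 0 < volume (cubeE lam T) := by
  rw [cubeE_vol hg]
  exact ENNReal.ofReal_pos.mpr (tp_pos _)

lemma cubeE_vol_ne_top (T : ℕ) : volume (cubeE lam T) ≠ ⊤ := by
  rw [cubeE_vol hg]
  exact ENNReal.ofReal_ne_top

lemma cubeE_bounded (T : ℕ) : Bornology.IsBounded (cubeE lam T) := by
  apply Bornology.IsBounded.pi
  intro i
  fin_cases i
  · exact Metric.isBounded_Ico 0 1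
  · exact Metric.isBounded_Ico 0 1
  · exact (Metric.isBounded_Ico 0 ((2:ℝ) ^ (lam T - 1))).subset (zset_subset hg T)


omit hg

lemma tp_halfdiff (a : ℤ) : (2:ℝ) ^ a - 2 ^ (a - 1) = 2 ^ (a - 1) := by
  have : (2:ℝ) ^ a = 2 ^ (a - 1) * 2 ^ (1:ℤ) := by rw [← tp_add]; ring_nf
  rw [this]
  norm_num
  ring

include hg

lemma USet_vol (K T t u : ℕ) (ht : t ≤ T) :
    volume (USet lam K T t u) = ENNReal.ofReal ((2:ℝ) ^ ((K:ℤ) - 3 + lam T - T)) := by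
  rw [USet, volume_pi_pi, Fin.prod_univ_three]
  simp only [Matrix.cons_val_zero, Matrix.cons_val_one, Matrix.head_cons,
    Matrix.cons_val_two, Matrix.tail_cons]
  rw [Real.volume_Ico, Real.volume_Ico, vz_vol hg, Nat.add_sub_cancel' ht]
  have e0 : (2:ℝ) ^ ((K:ℤ) + 1 - t - u) - 2 ^ ((K:ℤ) - t - u) = 2 ^ ((K:ℤ) - t - u) := by
    have := tp_halfdiff ((K:ℤ) + 1 - t - u)
    have e : (K:ℤ) + 1 - t - u - 1 = (K:ℤ) - t - u := by ring
    rw [e] at this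
    exact this
  have e1 : (2:ℝ) ^ ((u:ℤ)) - 2 ^ ((u:ℤ) - 1) = 2 ^ ((u:ℤ) - 1) := tp_halfdiff _
  rw [e0, e1]
  rw [← ENNReal.ofReal_mul (tp_pos _).le, ← ENNReal.ofReal_mul (by positivity)]
  rw [← tp_add, ← tp_add]
  congr 1
  have hTt : ((T - t : ℕ) : ℤ) = (T:ℤ) - t := by
    omega
  rw [hTt]
  congr 1
  ring

omit hg

lemma USet_disjoint (K T : ℕ) {t u t' u' : ℕ} (h : (t, u) ≠ (t', u'))
    (htu : t + u ≤ K) (htu' : t' + u' ≤ K) :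
    Disjoint (USet lam K T t u) (USet lam K T t' u') := by
  rw [Set.disjoint_left]
  intro x hx hx'
  have hx0 : x 0 ∈ Ico ((2:ℝ) ^ ((K:ℤ) - t - u)) ((2:ℝ) ^ ((K:ℤ) + 1 - t - u)) := by
    have := hx 0 (Set.mem_univ _)
    simpa using this
  have hx0' : x 0 ∈ Ico ((2:ℝ) ^ ((K:ℤ) - t' - u')) ((2:ℝ) ^ ((K:ℤ) + 1 - t' - u')) := by
    have := hx' 0 (Set.mem_univ _)
    simpa using this
  have hx1 : x 1 ∈ Ico ((2:ℝ) ^ ((u:ℤ) - 1)) ((2:ℝ) ^ ((u:ℤ))) := by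
    have := hx 1 (Set.mem_univ _)
    simpa using this
  have hx1' : x 1 ∈ Ico ((2:ℝ) ^ ((u':ℤ) - 1)) ((2:ℝ) ^ ((u':ℤ))) := by
    have := hx' 1 (Set.mem_univ _)
    simpa using this
  by_cases hsum : t + u = t' + u'
  · -- then u ≠ u'
    have huu : u ≠ u' := by
      intro he
      apply h
      have : t = t' := by omega
      rw [this, he]
    have key : ∀ a b : ℕ, a < b → ¬ (x 1 ∈ Ico ((2:ℝ) ^ ((a:ℤ) - 1)) ((2:ℝ) ^ ((a:ℤ))) ∧
        x 1 ∈ Ico ((2:ℝ) ^ ((b:ℤ) - 1)) ((2:ℝ) ^ ((b:ℤ)))) := by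
      rintro a b hab ⟨⟨_, h2⟩, ⟨h3, _⟩⟩
      have : (2:ℝ) ^ ((a:ℤ)) ≤ 2 ^ ((b:ℤ) - 1) := tp_mono (by omega)
      linarith
    rcases lt_or_gt_of_ne huu with hlt | hgt
    · exact key u u' hlt ⟨hx1, hx1'⟩
    · exact key u' u hgt ⟨hx1', hx1⟩
  · have key : ∀ a b a' b' : ℕ, a + b < a' + b' → a' + b' ≤ K →
        ¬ (x 0 ∈ Ico ((2:ℝ) ^ ((K:ℤ) - a - b)) ((2:ℝ) ^ ((K:ℤ) + 1 - a - b)) ∧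
           x 0 ∈ Ico ((2:ℝ) ^ ((K:ℤ) - a' - b')) ((2:ℝ) ^ ((K:ℤ) + 1 - a' - b'))) := by
      rintro a b a' b' hab hK' ⟨⟨h1, _⟩, ⟨_, h4⟩⟩
      have : (2:ℝ) ^ ((K:ℤ) + 1 - a' - b') ≤ 2 ^ ((K:ℤ) - a - b) := tp_mono (by omega)
      linarith
    rcases lt_or_gt_of_ne hsum with hlt | hgt
    · exact key t u t' u' hlt htu' ⟨hx0, hx0'⟩
    · exact key t' u' t u hgt htu ⟨hx0', hx0⟩

lemma lint_ind (E S : Set (Fin 3 → ℝ)) (hE : MeasurableSet E) :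
    ∫⁻ y in S, ENNReal.ofReal |E.indicator (fun _ => (1:ℝ)) y| ∂volume = volume (E ∩ S) := by
  have hpt : ∀ y, ENNReal.ofReal |E.indicator (fun _ => (1:ℝ)) y| =
      E.indicator (fun _ => (1:ℝ≥0∞)) y := by
    intro y
    by_cases h : y ∈ E <;> simp [Set.indicator_of_mem, Set.indicator_of_notMem, h]
  simp_rw [hpt]
  rw [setLIntegral_indicator hE, setLIntegral_one]


include hg

/-- Coverage: every point of `USet` sees a box from the basis on which
the indicator of `cubeE` has average exceeding `α`. -/
lemma USet_subset_level
    (Γ : Set ℤ) (B : Set (BoxInterval 3))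
    (hB : ∀ R : BoxInterval 3, (∃ s : ℤ, R.side 0 = (2:ℝ) ^ s) →
      (∃ s : ℤ, R.side 1 = (2:ℝ) ^ s) →
      (∃ g ∈ Γ, R.side 2 = (2:ℝ) ^ g * R.side 1) → R ∈ B)
    (K T t u : ℕ)
    (γ : ℕ → ℤ) (hmemt : γ t ∈ Γ) (hlam : ∀ n, lam n = γ n + K + 3)
    (hgapγ : ∀ n, γ n + ((K:ℤ) + 5) ≤ γ (n+1))
    (ht1 : 1 ≤ t) (ht2 : t ≤ T) (hu1 : 1 ≤ u) (huK : u ≤ K)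
    (htu : t + u + 2 ≤ K)
    (α : ℝ) (hα0 : 0 ≤ α) (hα : α < (2:ℝ) ^ (-(K:ℤ) - 2)) :
    USet lam K T t u ⊆
      {x | ENNReal.ofReal α <
        maxOp B ((cubeE lam T).indicator fun _ => (1:ℝ)) x} := by
  intro x hx
  have hx0 : x 0 ∈ Ico ((2:ℝ) ^ ((K:ℤ) - t - u)) ((2:ℝ) ^ ((K:ℤ) + 1 - t - u)) := by
    have := hx 0 (Set.mem_univ _); simpa using this
  have hx1 : x 1 ∈ Ico ((2:ℝ) ^ ((u:ℤ) - 1)) ((2:ℝ) ^ ((u:ℤ))) := by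
    have := hx 1 (Set.mem_univ _); simpa using this
  have hx2 : x 2 ∈ vz lam t (T - t) := by
    have := hx 2 (Set.mem_univ _); simpa [USet] using this
  obtain ⟨σ, hσ1, hσ2⟩ := vz_branch t (T - t) (x 2) hx2
  rw [Nat.add_sub_cancel' ht2] at hσ2
  set Az : ℤ := (K:ℤ) + 1 - t - u with hAz
  set wz : ℤ := (u:ℤ) + γ t with hwz
  -- the box
  set R : BoxInterval 3 := ⟨![x 0 - 2 ^ Az, x 1 - 2 ^ ((u:ℤ)), x 2],
      ![x 0, x 1, x 2 + 2 ^ wz], by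
    intro j
    fin_cases j <;> simp <;> positivity⟩ with hR
  have hside0 : R.side 0 = 2 ^ Az := by simp [BoxInterval.side, hR]
  have hside1 : R.side 1 = 2 ^ ((u:ℤ)) := by simp [BoxInterval.side, hR]
  have hside2 : R.side 2 = 2 ^ wz := by simp [BoxInterval.side, hR]
  have hRB : R ∈ B := by
    refine hB R ⟨Az, hside0⟩ ⟨(u:ℤ), hside1⟩ ⟨γ t, hmemt, ?_⟩
    rw [hside2, hside1, ← tp_add]
    congr 1
    rw [hwz]; ring
  have hxR : x ∈ R.toSet := by
    intro j _
    fin_cases j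
    · show x 0 ∈ Icc (x 0 - 2 ^ Az) (x 0)
      exact ⟨by have := tp_pos Az; linarith, le_refl _⟩
    · show x 1 ∈ Icc (x 1 - 2 ^ ((u:ℤ))) (x 1)
      exact ⟨by have := tp_pos ((u:ℤ)); linarith, le_refl _⟩
    · show x 2 ∈ Icc (x 2) (x 2 + 2 ^ wz)
      exact ⟨le_refl _, by have := tp_pos wz; linarith⟩
  -- the window in the third coordinate
  have hcast : ∀ n : ℕ, ((n:ℤ):ℝ) = (n:ℝ) := fun n => by push_cast; ring
  have hcap : ENNReal.ofReal ((2:ℝ) ^ (wz - t - 1)) ≤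
      volume (zset lam T ∩ Icc (x 2) (x 2 + 2 ^ wz)) := by
    obtain ⟨s, rfl⟩ : ∃ s, t = s + 1 := ⟨t - 1, by omega⟩
    have himg : (fun z => σ + z) '' (zset lam (s+1) ∩
        Icc (x 2 - σ) (x 2 - σ + 2 ^ wz)) ⊆
        zset lam T ∩ Icc (x 2) (x 2 + 2 ^ wz) := by
      rintro _ ⟨z, ⟨hz1, hz2⟩, rfl⟩
      refine ⟨hσ2 ⟨z, hz1, rfl⟩, ?_⟩
      obtain ⟨hz3, hz4⟩ := hz2
      show σ + z ∈ Icc (x 2) (x 2 + 2 ^ wz)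
      exact ⟨by linarith, by linarith⟩
    have hvol : volume ((fun z => σ + z) '' (zset lam (s+1) ∩
        Icc (x 2 - σ) (x 2 - σ + 2 ^ wz))) =
        volume (zset lam (s+1) ∩ Icc (x 2 - σ) (x 2 - σ + 2 ^ wz)) :=
      translate_vol σ _
    have hcap' := capture hg s wz ?_ ?_ (x 2 - σ) hσ1
    · exact le_trans (by exact_mod_cast hcap') (le_trans (le_of_eq hvol.symm) (measure_mono himg))
    · -- lam s + 2 ≤ wz
      have := hgapγ s
      have h1 : (1:ℤ) ≤ (u:ℤ) := by exact_mod_cast hu1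
      rw [hlam s, hwz]
      omega
    · -- wz ≤ lam (s+1) - 3
      have hK : ((u:ℤ)) ≤ (K:ℤ) := by exact_mod_cast huK
      rw [hlam (s+1), hwz]
      omega
  -- lower bound on the mass of E in R
  have hmass : ENNReal.ofReal ((2:ℝ) ^ (wz - t - 1)) ≤
      volume (cubeE lam T ∩ R.toSet) := by
    have hWsub : (univ.pi ![Ico (0:ℝ) 1, Ico (0:ℝ) 1,
        zset lam T ∩ Icc (x 2) (x 2 + 2 ^ wz)]) ⊆ cubeE lam T ∩ R.toSet := by
      intro y hy
      have hy0 : y 0 ∈ Ico (0:ℝ) 1 := by have := hy 0 (Set.mem_univ _); simpa using this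
      have hy1 : y 1 ∈ Ico (0:ℝ) 1 := by have := hy 1 (Set.mem_univ _); simpa using this
      have hy2 : y 2 ∈ zset lam T ∩ Icc (x 2) (x 2 + 2 ^ wz) := by
        have := hy 2 (Set.mem_univ _); simpa using this
      constructor
      · intro j _
        fin_cases j
        · simpa using hy0
        · simpa using hy1
        · simpa using hy2.1
      · intro j _
        fin_cases j
        · show y 0 ∈ Icc (x 0 - 2 ^ Az) (x 0)
          constructor
          · have h2 := hx0.2
            have h3 := hy0.1
            linarith
          · have h1 : (1:ℝ) ≤ (2:ℝ) ^ ((K:ℤ) - t - u) := by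
              calc (1:ℝ) = 2 ^ (0:ℤ) := by norm_num
                _ ≤ 2 ^ ((K:ℤ) - t - u) := tp_mono (by omega)
            have h2 := hx0.1
            have h3 := hy0.2
            linarith
        · show y 1 ∈ Icc (x 1 - 2 ^ ((u:ℤ))) (x 1)
          constructor
          · have h2 := hx1.2
            have h3 := hy1.1
            linarith
          · have h1 : (1:ℝ) ≤ (2:ℝ) ^ ((u:ℤ) - 1) := by
              calc (1:ℝ) = 2 ^ (0:ℤ) := by norm_num
                _ ≤ 2 ^ ((u:ℤ) - 1) := tp_mono (by omega)
            have h2 := hx1.1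
            have h3 := hy1.2
            linarith
        · show y 2 ∈ Icc (x 2) (x 2 + 2 ^ wz)
          exact hy2.2
    calc ENNReal.ofReal ((2:ℝ) ^ (wz - t - 1))
        ≤ volume (zset lam T ∩ Icc (x 2) (x 2 + 2 ^ wz)) := hcap
      _ = volume (univ.pi ![Ico (0:ℝ) 1, Ico (0:ℝ) 1,
            zset lam T ∩ Icc (x 2) (x 2 + 2 ^ wz)]) := by
          rw [volume_pi_pi, Fin.prod_univ_three]
          simp only [Matrix.cons_val_zero, Matrix.cons_val_one, Matrix.head_cons,
            Matrix.cons_val_two, Matrix.tail_cons]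
          rw [Real.volume_Ico]
          norm_num
      _ ≤ volume (cubeE lam T ∩ R.toSet) := measure_mono hWsub
  -- the volume of R
  have hvolR : volume R.toSet = ENNReal.ofReal ((2:ℝ) ^ (Az + u + wz)) := by
    rw [BoxInterval.toSet, volume_pi_pi, Fin.prod_univ_three]
    simp only [hR, Matrix.cons_val_zero, Matrix.cons_val_one, Matrix.head_cons,
      Matrix.cons_val_two, Matrix.tail_cons]
    rw [Real.volume_Icc, Real.volume_Icc, Real.volume_Icc]
    have e0 : x 0 - (x 0 - 2 ^ Az) = (2:ℝ) ^ Az := by ring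
    have e1 : x 1 - (x 1 - 2 ^ ((u:ℤ))) = (2:ℝ) ^ ((u:ℤ)) := by ring
    have e2 : x 2 + 2 ^ wz - x 2 = (2:ℝ) ^ wz := by ring
    rw [e0, e1, e2]
    rw [← ENNReal.ofReal_mul (tp_pos _).le, ← ENNReal.ofReal_mul (by positivity)]
    rw [← tp_add, ← tp_add]
  -- conclude
  show ENNReal.ofReal α < maxOp B ((cubeE lam T).indicator fun _ => (1:ℝ)) x
  have hterm : ENNReal.ofReal α <
      (∫⁻ y in R.toSet, ENNReal.ofReal |(cubeE lam T).indicator (fun _ => (1:ℝ)) y| ∂volume) /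
        volume R.toSet := by
    rw [lint_ind _ _ (cubeE_meas T), hvolR]
    rw [ENNReal.lt_div_iff_mul_lt (Or.inl (by positivity)) (Or.inl ENNReal.ofReal_ne_top)]
    calc ENNReal.ofReal α * ENNReal.ofReal ((2:ℝ) ^ (Az + u + wz))
        = ENNReal.ofReal (α * 2 ^ (Az + u + wz)) := by
          rw [← ENNReal.ofReal_mul hα0]
      _ < ENNReal.ofReal ((2:ℝ) ^ (wz - t - 1)) := by
          apply ENNReal.ofReal_lt_ofReal_iff_of_nonneg (by positivity) |>.mpr
          have key : (2:ℝ) ^ (wz - t - 1) = 2 ^ (-(K:ℤ) - 2) * 2 ^ (Az + u + wz) := by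
            rw [← tp_add]
            congr 1
            rw [hAz, hwz]
            ring
          rw [key]
          exact mul_lt_mul_of_pos_right hα (tp_pos _)
      _ ≤ volume (cubeE lam T ∩ R.toSet) := hmass
  calc ENNReal.ofReal α < _ := hterm
    _ ≤ maxOp B ((cubeE lam T).indicator fun _ => (1:ℝ)) x := by
      apply le_iSup_of_le R
      apply le_iSup_of_le hRB
      exact le_iSup_of_le hxR le_rfl



omit hg

/-- Main construction: for dyadic-level `α` below `2^(-K-2)`, the set `E = cubeE`
has superlevel set of measure at least `(K/2-1)^2 2^(K-2) |E|`. -/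
theorem construction
    (Γ : Set ℤ) (B : Set (BoxInterval 3))
    (hB : ∀ R : BoxInterval 3, (∃ s : ℤ, R.side 0 = (2:ℝ) ^ s) →
      (∃ s : ℤ, R.side 1 = (2:ℝ) ^ s) →
      (∃ g ∈ Γ, R.side 2 = (2:ℝ) ^ g * R.side 1) → R ∈ B)
    (K : ℕ) (hK : 13 ≤ K)
    (γ : ℕ → ℤ) (hmem : ∀ n ≤ K, γ n ∈ Γ) (hgapγ : ∀ n, γ n + ((K:ℤ) + 5) ≤ γ (n+1))
    (α : ℝ) (hα0 : 0 ≤ α) (hα : α < (2:ℝ) ^ (-(K:ℤ) - 2)) :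
    ∃ E : Set (Fin 3 → ℝ), Bornology.IsBounded E ∧ MeasurableSet E ∧ 0 < volume E ∧
      ENNReal.ofReal ((((K / 2 - 1 : ℕ) : ℝ)) ^ 2 * (2:ℝ) ^ ((K:ℤ) - 2)) * volume E ≤
        volume {x | ENNReal.ofReal α < maxOp B (E.indicator fun _ => (1:ℝ)) x} := by
  classical
  set lam : ℕ → ℤ := fun n => γ n + K + 3 with hlamdef
  have hlam : ∀ n, lam n = γ n + K + 3 := fun n => rfl
  have hg : ∀ n, lam n + 2 ≤ lam (n+1) := by
    intro n
    have := hgapγ n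
    simp only [hlamdef]
    omega
  set T : ℕ := K - 2 with hT
  set Q : ℕ := K / 2 - 1 with hQ
  have hQT : Q ≤ T := by omega
  have hQ1 : 1 ≤ Q := by omega
  have h2Q : 2 * Q + 2 ≤ K := by omega
  refine ⟨cubeE lam T, cubeE_bounded hg T, cubeE_meas T, cubeE_vol_pos hg T, ?_⟩
  set FF : Finset (ℕ × ℕ) := Finset.Icc 1 Q ×ˢ Finset.Icc 1 Q with hFF
  have hFFmem : ∀ p ∈ FF, 1 ≤ p.1 ∧ p.1 ≤ Q ∧ 1 ≤ p.2 ∧ p.2 ≤ Q := by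
    intro p hp
    rw [hFF, Finset.mem_product, Finset.mem_Icc, Finset.mem_Icc] at hp
    exact ⟨hp.1.1, hp.1.2, hp.2.1, hp.2.2⟩
  -- the union of the USets is inside the superlevel set
  have hsub : (⋃ p ∈ FF, USet lam K T p.1 p.2) ⊆
      {x | ENNReal.ofReal α <
        maxOp B ((cubeE lam T).indicator fun _ => (1:ℝ)) x} := by
    apply Set.iUnion₂_subset
    intro p hp
    obtain ⟨h1, h2, h3, h4⟩ := hFFmem p hp
    exact USet_subset_level hg Γ B hB K T p.1 p.2 γ (hmem p.1 (by omega)) hlam hgapγ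
      h1 (le_trans h2 hQT) h3 (by omega) (by omega) α hα0 hα
  -- disjointness
  have hdis : (FF : Set (ℕ × ℕ)).PairwiseDisjoint
      (fun p => USet lam K T p.1 p.2) := by
    intro p hp q hq hpq
    obtain ⟨hp1, hp2, hp3, hp4⟩ := hFFmem p hp
    obtain ⟨hq1, hq2, hq3, hq4⟩ := hFFmem q hq
    exact USet_disjoint K T (by simpa using hpq) (by omega) (by omega)
  -- measures
  have hvolU : ∀ p ∈ FF, volume (USet lam K T p.1 p.2) =
      ENNReal.ofReal ((2:ℝ) ^ ((K:ℤ) - 3 + lam T - T)) := by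
    intro p hp
    exact USet_vol hg K T p.1 p.2 (le_trans (hFFmem p hp).2.1 hQT)
  have hcard : FF.card = Q ^ 2 := by
    rw [hFF, Finset.card_product, Nat.card_Icc]
    simp [sq]
  calc ENNReal.ofReal ((((Q : ℕ) : ℝ)) ^ 2 * (2:ℝ) ^ ((K:ℤ) - 2)) * volume (cubeE lam T)
      = ENNReal.ofReal ((((Q : ℕ) : ℝ)) ^ 2 * (2:ℝ) ^ ((K:ℤ) - 2)) *
          ENNReal.ofReal ((2:ℝ) ^ (lam T - 1 - T)) := by rw [cubeE_vol hg]
    _ = ∑ p ∈ FF, volume (USet lam K T p.1 p.2) := by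
        rw [Finset.sum_congr rfl hvolU, Finset.sum_const, hcard, nsmul_eq_mul]
        rw [← ENNReal.ofReal_natCast (Q ^ 2), ← ENNReal.ofReal_mul (by positivity),
          ← ENNReal.ofReal_mul (by positivity)]
        congr 1
        push_cast
        rw [mul_assoc, ← tp_add]
        congr 2
        ring
    _ = volume (⋃ p ∈ FF, USet lam K T p.1 p.2) := by
        rw [measure_biUnion_finset hdis (fun p _ => USet_meas K T p.1 p.2)]
    _ ≤ volume {x | ENNReal.ofReal α <
          maxOp B ((cubeE lam T).indicator fun _ => (1:ℝ)) x} := measure_mono hsub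


/-- selection of an increasing, well-separated finite family within an infinite set -/
lemma gamma_select (Γ : Set ℤ) (hΓ : Γ.Infinite) (N : ℕ) (d : ℤ) :
    ∃ g : ℕ → ℤ, (∀ n ≤ N, g n ∈ Γ) ∧ ∀ n, g n + d ≤ g (n + 1) := by
  classical
  obtain ⟨x0, hx0⟩ := hΓ.nonempty
  by_cases hup : ∀ c : ℤ, ∃ x ∈ Γ, c < x
  · choose f hf1 hf2 using hup
    refine ⟨fun n => Nat.rec x0 (fun _ prev => f (prev + d)) n, fun n _ => ?_, fun n => ?_⟩
    · cases n with
      | zero => exact hx0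
      | succ m => exact hf1 _
    · exact le_of_lt (hf2 _)
  · push_neg at hup
    obtain ⟨c, hc⟩ := hup
    have hdown : ∀ c' : ℤ, ∃ x ∈ Γ, x < c' := by
      intro c'
      by_contra hcon
      push_neg at hcon
      exact hΓ ((Set.finite_Icc c' c).subset (fun x hx => ⟨hcon x hx, hc x hx⟩))
    choose f hf1 hf2 using hdown
    set h : ℕ → ℤ := fun n => Nat.rec x0 (fun _ prev => f (prev - d)) n with hh
    have hhmem : ∀ n, h n ∈ Γ := by
      intro n
      cases n with
      | zero => exact hx0
      | succ m => exact hf1 _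
    have hhdec : ∀ n, h (n + 1) ≤ h n - d := fun n => le_of_lt (hf2 _)
    refine ⟨fun n => if n ≤ N then h (N - n) else h 0 + d * ((n : ℤ) - N), fun n hn => ?_,
      fun n => ?_⟩
    · simp only [if_pos hn]
      exact hhmem _
    · rcases lt_trichotomy n N with hlt | rfl | hgt
      · have h1 : n ≤ N := hlt.le
        have h2 : n + 1 ≤ N := hlt
        simp only [if_pos h1, if_pos h2]
        have e : N - n = (N - (n + 1)) + 1 := by omega
        rw [e]
        have := hhdec (N - (n + 1))
        omega
      · simp only [if_pos (le_refl n), if_neg (by omega : ¬ n + 1 ≤ n)]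
        have e : n - n = 0 := by omega
        have : ((n : ℤ) + 1 - n) = 1 := by ring
        rw [Nat.sub_self]
        push_cast
        nlinarith [this]
      · simp only [if_neg (by omega : ¬ n ≤ N), if_neg (by omega : ¬ n + 1 ≤ N)]
        push_cast
        nlinarith


end Stmt11Aux

open Stmt11Aux in
/-- Application III (Zygmund bases): sharp weak type `L(1+log⁺L)²` lower bound. -/
theorem statement11 (Γ : Set ℤ) (hΓ : Γ.Infinite)
    (B : Set (BoxInterval 3))
    (hBdef : B = {R | (∃ s : ℤ, R.side 0 = (2:ℝ) ^ s) ∧ (∃ s : ℤ, R.side 1 = (2:ℝ) ^ s) ∧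
      ∃ γ ∈ Γ, R.side 2 = (2:ℝ) ^ γ * R.side 1}) :
    ∃ c : ℝ, 0 < c ∧ ∀ α : ℝ, 0 < α → α < 1 →
      ∃ E : Set (Fin 3 → ℝ), Bornology.IsBounded E ∧ MeasurableSet E ∧ 0 < volume E ∧
        ENNReal.ofReal (c * (1 / α) * (1 + Real.logb 2 (1 / α)) ^ 2) * volume E ≤
          volume {x | ENNReal.ofReal α < maxOp B (E.indicator fun _ => (1:ℝ)) x} := by
  classical
  have hB : ∀ R : BoxInterval 3, (∃ s : ℤ, R.side 0 = (2:ℝ) ^ s) →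
      (∃ s : ℤ, R.side 1 = (2:ℝ) ^ s) →
      (∃ g ∈ Γ, R.side 2 = (2:ℝ) ^ g * R.side 1) → R ∈ B := by
    intro R h1 h2 h3
    rw [hBdef]
    exact ⟨h1, h2, h3⟩
  refine ⟨1 / 33554432, by norm_num, ?_⟩
  intro α hα0 hα1
  set L : ℝ := Real.logb 2 (1 / α) with hL
  have hinv1 : 1 < 1 / α := one_lt_one_div hα0 hα1
  have hL0 : 0 ≤ L := Real.logb_nonneg (by norm_num) hinv1.le
  have h2L : (2:ℝ) ^ L = 1 / α := Real.rpow_logb (by norm_num) (by norm_num) (by positivity)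
  have h216 : (2:ℝ) ^ ((16:ℕ):ℝ) = 65536 := by
    rw [Real.rpow_natCast]; norm_num
  by_cases hsmall : α < 1 / 65536
  · -- main branch
    have h16inv : (65536:ℝ) < 1 / α := by
      rw [lt_div_iff₀ hα0]
      linarith
    have hL16 : (16:ℝ) < L := by
      rw [hL]
      rw [show ((16:ℝ)) = ((16:ℕ):ℝ) by norm_num]
      rw [Real.lt_logb_iff_rpow_lt (by norm_num) (by positivity)]
      rw [h216]
      exact h16inv
    set K : ℕ := ⌊L⌋₊ - 3 with hK
    have hfl : 16 ≤ ⌊L⌋₊ := Nat.le_floor (by exact_mod_cast hL16.le)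
    have hK13 : 13 ≤ K := by omega
    have hKcast : (K:ℝ) = (⌊L⌋₊ : ℝ) - 3 := by
      rw [hK]
      push_cast [Nat.cast_sub (by omega : 3 ≤ ⌊L⌋₊)]
      ring
    have hK3L : (K:ℝ) + 3 ≤ L := by
      rw [hKcast]
      have := Nat.floor_le hL0
      linarith
    have hLK4 : L < (K:ℝ) + 4 := by
      rw [hKcast]
      have := Nat.lt_floor_add_one L
      linarith
    -- α is below the construction level
    have hαK : α < (2:ℝ) ^ (-(K:ℤ) - 2) := by
      have hα_eq : α = (2:ℝ) ^ (-L) := by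
        rw [Real.rpow_neg (by norm_num), h2L]
        field_simp
      have hrw : (2:ℝ) ^ (-(K:ℤ) - 2) = (2:ℝ) ^ ((-(K:ℝ) - 2 : ℝ)) := by
        rw [show ((-(K:ℝ) - 2 : ℝ)) = (((-(K:ℤ) - 2 : ℤ)):ℝ) by push_cast; ring,
          Real.rpow_intCast]
      rw [hα_eq, hrw]
      apply Real.rpow_lt_rpow_left_iff (by norm_num : (1:ℝ) < 2) |>.mpr
      linarith
    obtain ⟨γ, hγmem, hγgap⟩ := gamma_select Γ hΓ K ((K:ℤ) + 5)
    obtain ⟨E, hbd, hms, hpos, hineq⟩ := construction Γ B hB K hK13 γ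
      (fun n _ => hγmem n (by omega)) hγgap α hα0.le hαK
    refine ⟨E, hbd, hms, hpos, ?_⟩
    refine le_trans ?_ hineq
    apply mul_le_mul_left
    apply ENNReal.ofReal_le_ofReal
    -- the real inequality
    set Q : ℕ := K / 2 - 1 with hQ
    have hQK : (K:ℝ) ≤ 4 * (Q:ℝ) := by
      have : K ≤ 4 * Q := by omega
      exact_mod_cast this
    set PN : ℝ := (2:ℝ) ^ (K:ℕ) with hPN
    have hPNpos : 0 < PN := by positivity
    have hzpow : (2:ℝ) ^ ((K:ℤ) - 2) = PN / 4 := by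
      have : (2:ℝ) ^ ((K:ℤ) - 2) * (2:ℝ) ^ ((2:ℤ)) = PN := by
        rw [← tp_add]
        rw [show (K:ℤ) - 2 + 2 = (K:ℤ) by ring, zpow_natCast]
      have h4 : (2:ℝ) ^ ((2:ℤ)) = 4 := by norm_num
      rw [h4] at this
      linarith
    have e1 : 1 / α ≤ 16 * PN := by
      rw [← h2L]
      have : (2:ℝ) ^ L ≤ (2:ℝ) ^ ((K:ℝ) + 4) :=
        Real.rpow_le_rpow_left_iff (by norm_num : (1:ℝ) < 2) |>.mpr hLK4.le
      refine le_trans this (le_of_eq ?_)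
      rw [Real.rpow_add (by norm_num), Real.rpow_natCast]
      rw [show (2:ℝ) ^ (4:ℝ) = 16 by
        rw [show (4:ℝ) = ((4:ℕ):ℝ) by norm_num, Real.rpow_natCast]; norm_num]
      ring
    have e2 : 1 + L ≤ 2 * (K:ℝ) := by
      have : (13:ℝ) ≤ (K:ℝ) := by exact_mod_cast hK13
      linarith
    have hL1 : (0:ℝ) ≤ 1 + L := by linarith
    calc 1 / 33554432 * (1 / α) * (1 + L) ^ 2
        ≤ 1 / 33554432 * (16 * PN) * (2 * (K:ℝ)) ^ 2 := by
          apply mul_le_mul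
          · apply mul_le_mul_of_nonneg_left e1 (by norm_num)
          · apply pow_le_pow_left₀ hL1 e2
          · positivity
          · positivity
      _ ≤ ((Q:ℝ)) ^ 2 * (PN / 4) := by
          have hQ0 : (0:ℝ) ≤ (Q:ℝ) := by positivity
          nlinarith [sq_nonneg ((K:ℝ) - 4 * (Q:ℝ)), hPNpos.le, hQK,
            mul_le_mul_of_nonneg_right (mul_self_le_mul_self (by positivity) hQK) hPNpos.le]
      _ = ((Q:ℝ)) ^ 2 * (2:ℝ) ^ ((K:ℤ) - 2) := by rw [hzpow]
  · -- trivial branch: α ≥ 1/65536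
    push_neg at hsmall
    have hinvle : 1 / α ≤ 65536 := by
      rw [div_le_iff₀ hα0]
      linarith
    have hLle : L ≤ 16 := by
      have h1 : (2:ℝ) ^ L ≤ (2:ℝ) ^ ((16:ℕ):ℝ) := by
        rw [h2L, h216]
        exact hinvle
      have := Real.rpow_le_rpow_left_iff (by norm_num : (1:ℝ) < 2) |>.mp h1
      simpa using this
    obtain ⟨g0, hg0⟩ := hΓ.nonempty
    set R₀ : BoxInterval 3 := ⟨![0, 0, 0], ![1, 1, (2:ℝ) ^ g0], by
      intro j
      fin_cases j <;> simp <;> positivity⟩ with hR₀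
    set E : Set (Fin 3 → ℝ) := R₀.toSet with hE
    have hms : MeasurableSet E := MeasurableSet.univ_pi fun i => measurableSet_Icc
    have hbd : Bornology.IsBounded E :=
      Bornology.IsBounded.pi fun i => Metric.isBounded_Icc _ _
    have hvolE : volume E = ENNReal.ofReal ((2:ℝ) ^ g0) := by
      rw [hE, BoxInterval.toSet, volume_pi_pi, Fin.prod_univ_three]
      have e0 : Icc (R₀.a 0) (R₀.b 0) = Icc (0:ℝ) 1 := rfl
      have e1 : Icc (R₀.a 1) (R₀.b 1) = Icc (0:ℝ) 1 := rfl
      have e2 : Icc (R₀.a 2) (R₀.b 2) = Icc (0:ℝ) ((2:ℝ) ^ g0) := rfl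
      rw [e0, e1, e2]
      simp [Real.volume_Icc]
    have hpos : 0 < volume E := by
      rw [hvolE]
      exact ENNReal.ofReal_pos.mpr (by positivity)
    have hne_top : volume E ≠ ⊤ := by
      rw [hvolE]
      exact ENNReal.ofReal_ne_top
    have hR₀B : R₀ ∈ B := by
      apply hB
      · exact ⟨0, by simp [BoxInterval.side, hR₀]⟩
      · exact ⟨0, by simp [BoxInterval.side, hR₀]⟩
      · refine ⟨g0, hg0, ?_⟩
        simp [BoxInterval.side, hR₀]
    have hEsub : E ⊆ {x | ENNReal.ofReal α < maxOp B (E.indicator fun _ => (1:ℝ)) x} := by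
      intro x hx
      show ENNReal.ofReal α < maxOp B (E.indicator fun _ => (1:ℝ)) x
      have hterm : (∫⁻ y in R₀.toSet, ENNReal.ofReal |E.indicator (fun _ => (1:ℝ)) y| ∂volume) /
          volume R₀.toSet = 1 := by
        rw [lint_ind _ _ hms]
        rw [show E ∩ R₀.toSet = E by rw [hE, Set.inter_self]]
        exact ENNReal.div_self (by rw [hE] at hpos ⊢; exact hpos.ne') (by rw [hE] at hne_top ⊢; exact hne_top)
      have h1 : ENNReal.ofReal α < 1 := ENNReal.ofReal_lt_one.mpr hα1
      refine lt_of_lt_of_le h1 ?_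
      rw [← hterm]
      apply le_iSup_of_le R₀
      apply le_iSup_of_le hR₀B
      exact le_iSup_of_le hx le_rfl
    refine ⟨E, hbd, hms, hpos, ?_⟩
    calc ENNReal.ofReal (1 / 33554432 * (1 / α) * (1 + L) ^ 2) * volume E
        ≤ 1 * volume E := by
          apply mul_le_mul_left
          apply ENNReal.ofReal_le_one.mpr
          nlinarith [hinvle, hLle, hL0, hα0, one_div_pos.mpr hα0]
      _ = volume E := one_mul _
      _ ≤ volume {x | ENNReal.ofReal α < maxOp B (E.indicator fun _ => (1:ℝ)) x} :=
          measure_mono hEsub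

end
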